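/- Let e₁, …, e_n be independent real random variables with E[e_i] = 0 and E[e_i²] ≤ σ². Let (a_{ik})_{1≤i≤n, 1≤k≤n} be real numbers with (1/n)Σ_{i=1}^n a_{ik}² = 1 for each k, and let ρ₁ ≤ … ≤ ρ_n be positive reals. Then E[ sup over (v_k) ∈ ℝ^n, not all zero, of ((1/n)Σ_i e_i Σ_k v_k a_{ik})² / Σ_k (1+λρ_k)v_k² ] ≤ (σ²/n) Σ_{k=1}^n (1 + λρ_k)^{−1} for every λ > 0. -/

import Mathlib

open MeasureTheory ProbabilityTheory
open scoped ENNReal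

lemma aux_sup {n : ℕ} (hn : 0 < n) (c d : Fin n → ℝ) (hd : ∀ k, 0 < d k) :
    (⨆ v : {v : Fin n → ℝ // v ≠ 0},
        ((1 / (n : ℝ)) * ∑ k, v.1 k * c k) ^ 2 / ∑ k, d k * (v.1 k) ^ 2)
      = (1 / (n : ℝ)) ^ 2 * ∑ k, (c k) ^ 2 / d k := by
  classical
  haveI : Nonempty {v : Fin n → ℝ // v ≠ 0} :=
    ⟨⟨fun _ => 1, by
      intro h
      have := congrFun h ⟨0, hn⟩
      simpa using this⟩⟩
  set T : ℝ := ∑ k, (c k) ^ 2 / d k with hT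
  have hT0 : 0 ≤ T := Finset.sum_nonneg fun k _ => div_nonneg (sq_nonneg _) (hd k).le
  have hub : ∀ v : {v : Fin n → ℝ // v ≠ 0},
      ((1 / (n : ℝ)) * ∑ k, v.1 k * c k) ^ 2 / ∑ k, d k * (v.1 k) ^ 2
        ≤ (1 / (n : ℝ)) ^ 2 * T := by
    rintro ⟨v, hv⟩
    have hden : 0 < ∑ k, d k * v k ^ 2 := by
      obtain ⟨k₀, hk₀⟩ := Function.ne_iff.mp hv
      refine Finset.sum_pos' (fun k _ => mul_nonneg (hd k).le (sq_nonneg _))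
        ⟨k₀, Finset.mem_univ _, ?_⟩
      have hk₀' : v k₀ ≠ 0 := by simpa using hk₀
      exact mul_pos (hd k₀) (lt_of_le_of_ne (sq_nonneg _) (Ne.symm (pow_ne_zero 2 hk₀')))
    rw [div_le_iff₀ hden]
    have hcs : (∑ k, v k * c k) ^ 2 ≤ (∑ k, d k * v k ^ 2) * T := by
      have h := Finset.sum_mul_sq_le_sq_mul_sq Finset.univ
        (fun k => Real.sqrt (d k) * v k) (fun k => c k / Real.sqrt (d k))
      have h1 : ∀ k : Fin n, Real.sqrt (d k) * v k * (c k / Real.sqrt (d k)) = v k * c k := by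
        intro k
        have hs : Real.sqrt (d k) ≠ 0 := (Real.sqrt_pos.mpr (hd k)).ne'
        field_simp
      have h2 : ∀ k : Fin n, (Real.sqrt (d k) * v k) ^ 2 = d k * v k ^ 2 := by
        intro k
        rw [mul_pow, Real.sq_sqrt (hd k).le]
      have h3 : ∀ k : Fin n, (c k / Real.sqrt (d k)) ^ 2 = c k ^ 2 / d k := by
        intro k
        rw [div_pow, Real.sq_sqrt (hd k).le]
      simp only [h1, h2, h3] at h
      exact h
    calc ((1 / (n : ℝ)) * ∑ k, v k * c k) ^ 2
        = (1 / (n : ℝ)) ^ 2 * (∑ k, v k * c k) ^ 2 := by ring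
      _ ≤ (1 / (n : ℝ)) ^ 2 * ((∑ k, d k * v k ^ 2) * T) := by
          exact mul_le_mul_of_nonneg_left hcs (by positivity)
      _ = (1 / (n : ℝ)) ^ 2 * T * ∑ k, d k * v k ^ 2 := by ring
  refine le_antisymm (ciSup_le hub) ?_
  by_cases hc : c = 0
  · simp [hc, ciSup_const, hT]
  · obtain ⟨k₀, hk₀0⟩ := Function.ne_iff.mp hc
    have hk₀ : c k₀ ≠ 0 := by simpa using hk₀0
    have hTpos : 0 < T := by
      refine Finset.sum_pos' (fun k _ => div_nonneg (sq_nonneg _) (hd k).le)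
        ⟨k₀, Finset.mem_univ _,
          div_pos (lt_of_le_of_ne (sq_nonneg _) (Ne.symm (pow_ne_zero 2 hk₀))) (hd k₀)⟩
    set v₀ : {v : Fin n → ℝ // v ≠ 0} :=
      ⟨fun k => c k / d k, by
        intro h
        have h0 : c k₀ / d k₀ = 0 := by
          have := congrFun h k₀
          simpa using this
        exact hk₀ ((div_eq_zero_iff.mp h0).resolve_right (hd k₀).ne')⟩ with hv₀
    have hsum1 : ∑ k, v₀.1 k * c k = T := by
      refine Finset.sum_congr rfl fun k _ => ?_
      simp only [hv₀]
      rw [div_mul_eq_mul_div, ← sq]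
    have hsum2 : ∑ k, d k * (v₀.1 k) ^ 2 = T := by
      refine Finset.sum_congr rfl fun k _ => ?_
      simp only [hv₀]
      rw [div_pow]
      field_simp [(hd k).ne']
    have hval : ((1 / (n : ℝ)) * ∑ k, v₀.1 k * c k) ^ 2 / ∑ k, d k * (v₀.1 k) ^ 2
        = (1 / (n : ℝ)) ^ 2 * T := by
      rw [hsum1, hsum2, mul_pow, mul_div_assoc, sq T, mul_div_assoc,
        div_self hTpos.ne', mul_one]
    calc (1 / (n : ℝ)) ^ 2 * T
        = ((1 / (n : ℝ)) * ∑ k, v₀.1 k * c k) ^ 2 / ∑ k, d k * (v₀.1 k) ^ 2 := hval.symm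
      _ ≤ _ := le_ciSup ⟨(1 / (n : ℝ)) ^ 2 * T, by
            rintro x ⟨v, rfl⟩
            exact hub v⟩ v₀
lemma memLp2_left_of_indepFun_add {Ω : Type*} [MeasurableSpace Ω] {μ : Measure Ω}
    [IsProbabilityMeasure μ] {X Y : Ω → ℝ} (hX : Measurable X) (hY : Measurable Y)
    (hXY : IndepFun X Y μ) (h : MemLp (fun ω => X ω + Y ω) 2 μ) : MemLp X 2 μ := by
  have hint : Integrable (fun ω => (X ω + Y ω) ^ 2) μ :=
    (memLp_two_iff_integrable_sq h.aestronglyMeasurable).mp h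
  have hmap : μ.map (fun ω => (X ω, Y ω)) = (μ.map X).prod (μ.map Y) :=
    (indepFun_iff_map_prod_eq_prod_map_map hX.aemeasurable hY.aemeasurable).mp hXY
  have hfin : ∫⁻ ω, ENNReal.ofReal ((X ω + Y ω) ^ 2) ∂μ < ⊤ := hint.lintegral_lt_top
  have hmeasf : Measurable (fun p : ℝ × ℝ => ENNReal.ofReal ((p.1 + p.2) ^ 2)) :=
    ((measurable_fst.add measurable_snd).pow_const 2).ennreal_ofReal
  have h1 : ∫⁻ p : ℝ × ℝ, ENNReal.ofReal ((p.1 + p.2) ^ 2) ∂((μ.map X).prod (μ.map Y)) < ⊤ := by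
    rw [← hmap, lintegral_map hmeasf (hX.prodMk hY)]
    exact hfin
  rw [lintegral_prod_symm _ hmeasf.aemeasurable] at h1
  haveI : IsProbabilityMeasure (μ.map Y) := Measure.isProbabilityMeasure_map hY.aemeasurable
  have hmeasg : Measurable (fun y : ℝ => ∫⁻ x, ENNReal.ofReal ((x + y) ^ 2) ∂(μ.map X)) :=
    Measurable.lintegral_prod_left' hmeasf
  have hae : ∀ᵐ y ∂(μ.map Y), (∫⁻ x, ENNReal.ofReal ((x + y) ^ 2) ∂(μ.map X)) < ⊤ :=
    ae_lt_top hmeasg h1.ne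
  obtain ⟨y₀, hy₀⟩ := hae.exists
  have key : ∫⁻ x, ENNReal.ofReal (x ^ 2) ∂(μ.map X) < ⊤ := by
    have hb : ∀ x : ℝ, ENNReal.ofReal (x ^ 2)
        ≤ 2 * ENNReal.ofReal ((x + y₀) ^ 2) + ENNReal.ofReal (2 * y₀ ^ 2) := by
      intro x
      have h2 : (2 : ℝ≥0∞) * ENNReal.ofReal ((x + y₀) ^ 2)
          = ENNReal.ofReal (2 * (x + y₀) ^ 2) := by
        rw [ENNReal.ofReal_mul (by norm_num)]
        norm_num
      rw [h2, ← ENNReal.ofReal_add (by positivity) (by positivity)]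
      exact ENNReal.ofReal_le_ofReal (by nlinarith [sq_nonneg (x + 2 * y₀)])
    calc ∫⁻ x, ENNReal.ofReal (x ^ 2) ∂(μ.map X)
        ≤ ∫⁻ x, (2 * ENNReal.ofReal ((x + y₀) ^ 2) + ENNReal.ofReal (2 * y₀ ^ 2)) ∂(μ.map X) :=
          lintegral_mono hb
      _ = 2 * (∫⁻ x, ENNReal.ofReal ((x + y₀) ^ 2) ∂(μ.map X))
            + ENNReal.ofReal (2 * y₀ ^ 2) * (μ.map X) Set.univ := by
          rw [lintegral_add_right _ measurable_const, lintegral_const,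
            lintegral_const_mul _ (((measurable_id'.add_const y₀).pow_const 2).ennreal_ofReal)]
      _ < ⊤ := by
          haveI : IsProbabilityMeasure (μ.map X) := Measure.isProbabilityMeasure_map hX.aemeasurable
          refine ENNReal.add_lt_top.mpr ⟨?_, ?_⟩
          · exact ENNReal.mul_lt_top (by norm_num) hy₀
          · exact ENNReal.mul_lt_top ENNReal.ofReal_lt_top (by simp)
  have key2 : ∫⁻ ω, ENNReal.ofReal ((X ω) ^ 2) ∂μ < ⊤ := by
    rwa [lintegral_map ((measurable_id'.pow_const 2).ennreal_ofReal) hX] at key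
  have hint2 : Integrable (fun ω => (X ω) ^ 2) μ := by
    refine ⟨(hX.pow_const 2).aestronglyMeasurable, ?_⟩
    have hnn : ∀ ω, ENNReal.ofReal ((X ω) ^ 2) = ‖X ω‖ₑ ^ 2 := fun ω => by
      rw [← Real.enorm_eq_ofReal (sq_nonneg _), enorm_pow]
    simpa [HasFiniteIntegral, hnn] using key2
  exact (memLp_two_iff_integrable_sq hX.aestronglyMeasurable).mpr hint2
open scoped ENNReal

/-- Finite-dimensional variance bound for the empirical process: with
independent centered noises with variance at most `σ²`, normalized design
values `a i k` and positive weights `ρ k`,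
`E[sup_v ((e, Σ_k v_k a_{·k})_n)² / Σ_k (1+λρ_k) v_k²] ≤ (σ²/n) Σ_k (1+λρ_k)⁻¹`. -/
theorem empirical_process_variance_bound
    {Ω : Type*} [MeasurableSpace Ω] (μ : Measure Ω) [IsProbabilityMeasure μ]
    (n : ℕ) (hn : 0 < n)
    (e : Fin n → Ω → ℝ)
    (hmeas : ∀ i, Measurable (e i))
    (hindep : iIndepFun e μ)
    (σ : ℝ) (hσ : 0 < σ)
    (hmean : ∀ i, ∫ ω, e i ω ∂μ = 0)
    (hvar : ∀ i, ∫ ω, (e i ω) ^ 2 ∂μ ≤ σ ^ 2)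
    (a : Fin n → Fin n → ℝ)
    (hnorm : ∀ k, (1 / (n : ℝ)) * ∑ i, (a i k) ^ 2 = 1)
    (ρ : Fin n → ℝ) (hρ : ∀ k, 0 < ρ k) (hρmono : Monotone ρ)
    (l : ℝ) (hl : 0 < l) :
    (∫ ω, (⨆ v : {v : Fin n → ℝ // v ≠ 0},
        ((1 / (n : ℝ)) * ∑ i, e i ω * ∑ k, v.1 k * a i k) ^ 2 /
          ∑ k, (1 + l * ρ k) * (v.1 k) ^ 2) ∂μ) ≤
      (σ ^ 2 / n) * ∑ k, (1 + l * ρ k)⁻¹ := by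
  classical
  have hn' : (n : ℝ) ≠ 0 := Nat.cast_ne_zero.mpr hn.ne'
  have hd : ∀ k : Fin n, 0 < 1 + l * ρ k := fun k => by linarith [mul_pos hl (hρ k)]
  set b : Fin n → Ω → ℝ := fun k ω => ∑ i, a i k * e i ω with hb
  have hbmeas : ∀ k, Measurable (b k) := fun k =>
    Finset.measurable_sum _ fun i _ => (hmeas i).const_mul _
  have hswap : ∀ (ω : Ω) (v : Fin n → ℝ),
      ∑ i, e i ω * ∑ k, v k * a i k = ∑ k, v k * b k ω := by
    intro ω v
    calc ∑ i, e i ω * ∑ k, v k * a i k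
        = ∑ i, ∑ k, e i ω * (v k * a i k) := by simp [Finset.mul_sum]
      _ = ∑ k, ∑ i, e i ω * (v k * a i k) := Finset.sum_comm
      _ = ∑ k, v k * b k ω := by
          refine Finset.sum_congr rfl fun k _ => ?_
          rw [hb, Finset.mul_sum]
          exact Finset.sum_congr rfl fun i _ => by ring
  have step1 : ∀ ω : Ω,
      (⨆ v : {v : Fin n → ℝ // v ≠ 0},
        ((1 / (n : ℝ)) * ∑ i, e i ω * ∑ k, v.1 k * a i k) ^ 2 /
          ∑ k, (1 + l * ρ k) * (v.1 k) ^ 2)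
        = (1 / (n : ℝ)) ^ 2 * ∑ k, (b k ω) ^ 2 / (1 + l * ρ k) := by
    intro ω
    rw [← aux_sup hn (fun k => b k ω) (fun k => 1 + l * ρ k) hd]
    exact iSup_congr fun v => by rw [hswap ω v.1]
  set G : Ω → ℝ := fun ω => ∑ k, (b k ω) ^ 2 / (1 + l * ρ k) with hG
  have hrw : (∫ ω, (⨆ v : {v : Fin n → ℝ // v ≠ 0},
        ((1 / (n : ℝ)) * ∑ i, e i ω * ∑ k, v.1 k * a i k) ^ 2 /
          ∑ k, (1 + l * ρ k) * (v.1 k) ^ 2) ∂μ)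
      = (1 / (n : ℝ)) ^ 2 * ∫ ω, G ω ∂μ := by
    rw [← integral_const_mul]
    exact integral_congr_ae (Filter.Eventually.of_forall fun ω => step1 ω)
  rw [hrw]
  have hRHS0 : 0 ≤ (σ ^ 2 / n) * ∑ k, (1 + l * ρ k)⁻¹ :=
    mul_nonneg (div_nonneg (sq_nonneg _) (Nat.cast_nonneg _))
      (Finset.sum_nonneg fun k _ => inv_nonneg.mpr (hd k).le)
  by_cases hGint : Integrable G μ
  · -- main case
    have hterm : ∀ k, Integrable (fun ω => (b k ω) ^ 2) μ := by
      intro k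
      have h1 : Integrable (fun ω => (1 + l * ρ k) * G ω) μ := hGint.const_mul _
      refine Integrable.mono' h1 ((hbmeas k).pow_const 2).aestronglyMeasurable
        (Filter.Eventually.of_forall fun ω => ?_)
      rw [Real.norm_eq_abs, abs_of_nonneg (sq_nonneg _)]
      have hle : (b k ω) ^ 2 / (1 + l * ρ k) ≤ G ω :=
        Finset.single_le_sum (f := fun j => (b j ω) ^ 2 / (1 + l * ρ j))
          (fun j _ => div_nonneg (sq_nonneg _) (hd j).le) (Finset.mem_univ k)
      calc (b k ω) ^ 2 = (1 + l * ρ k) * ((b k ω) ^ 2 / (1 + l * ρ k)) := by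
            field_simp [(hd k).ne']
        _ ≤ (1 + l * ρ k) * G ω := mul_le_mul_of_nonneg_left hle (hd k).le
    have hbLp : ∀ k, MemLp (b k) 2 μ := fun k =>
      (memLp_two_iff_integrable_sq (hbmeas k).aestronglyMeasurable).mpr (hterm k)
    have heLp : ∀ (k : Fin n) (i : Fin n), a i k ≠ 0 → MemLp (e i) 2 μ := by
      intro k i hik
      set f : Fin n → Ω → ℝ := fun j ω => a j k * e j ω with hf
      have hfmeas : ∀ j, Measurable (f j) := fun j => (hmeas j).const_mul _
      have hfindep : iIndepFun f μ :=
        hindep.comp (fun j (x : ℝ) => a j k * x) (fun j => measurable_const_mul _)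
      have hIndep0 : IndepFun (∑ j ∈ Finset.univ.erase i, f j) (f i) μ :=
        hfindep.indepFun_finset_sum_of_notMem hfmeas (Finset.notMem_erase i _)
      have hsumfn : (∑ j ∈ Finset.univ.erase i, f j)
          = fun ω => ∑ j ∈ Finset.univ.erase i, f j ω := by
        funext ω; simp [Finset.sum_apply]
      have hIndep : IndepFun (f i) (fun ω => ∑ j ∈ Finset.univ.erase i, f j ω) μ := by
        rw [← hsumfn]; exact hIndep0.symm
      have hsum : (fun ω => f i ω + ∑ j ∈ Finset.univ.erase i, f j ω) = b k := by
        funext ω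
        show f i ω + ∑ j ∈ Finset.univ.erase i, f j ω = ∑ j, f j ω
        exact Finset.add_sum_erase _ (fun j => f j ω) (Finset.mem_univ i)
      have hXY : MemLp (fun ω => f i ω + ∑ j ∈ Finset.univ.erase i, f j ω) 2 μ := by
        rw [hsum]; exact hbLp k
      have hfi : MemLp (f i) 2 μ :=
        memLp2_left_of_indepFun_add (hfmeas i)
          (Finset.measurable_sum _ fun j _ => hfmeas j) hIndep hXY
      have h2 : MemLp (fun ω => (a i k)⁻¹ * (a i k * e i ω)) 2 μ := hfi.const_mul _
      simpa [inv_mul_cancel_left₀ hik] using h2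
    have hvar' : ∀ k, ∫ ω, (b k ω) ^ 2 ∂μ ≤ σ ^ 2 * n := by
      intro k
      set S : Finset (Fin n) := Finset.univ.filter (fun i => a i k ≠ 0) with hS
      have hmemS : ∀ i ∈ S, a i k ≠ 0 := fun i hi => (Finset.mem_filter.mp hi).2
      have hbS : ∀ ω, b k ω = ∑ i ∈ S, a i k * e i ω := by
        intro ω
        rw [hb]
        symm
        refine Finset.sum_subset (Finset.filter_subset _ _) fun i _ hiS => ?_
        have : a i k = 0 := by
          by_contra hne
          exact hiS (Finset.mem_filter.mpr ⟨Finset.mem_univ i, hne⟩)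
        simp [this]
      have hLpS : ∀ i ∈ S, MemLp (fun ω => a i k * e i ω) 2 μ := fun i hi =>
        (heLp k i (hmemS i hi)).const_mul _
      have hmean_b : ∫ ω, b k ω ∂μ = 0 := by
        simp only [hbS]
        rw [integral_finset_sum S fun i hi =>
          ((heLp k i (hmemS i hi)).integrable one_le_two).const_mul _]
        refine Finset.sum_eq_zero fun i hi => ?_
        rw [integral_const_mul, hmean i, mul_zero]
      have hvb : ∫ ω, (b k ω) ^ 2 ∂μ = variance (b k) μ := by
        rw [variance_eq_sub (hbLp k), hmean_b]
        simp [Pi.pow_apply]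
      have hbfun : b k = ∑ i ∈ S, (fun ω => a i k * e i ω) := by
        funext ω
        rw [hbS ω]
        simp [Finset.sum_apply]
      have hsumvar : variance (b k) μ = ∑ i ∈ S, variance (fun ω => a i k * e i ω) μ := by
        rw [hbfun]
        refine IndepFun.variance_sum hLpS ?_
        intro i hi j hj hij
        exact (hindep.indepFun hij).comp (measurable_const_mul _) (measurable_const_mul _)
      have hvar_each : ∀ i ∈ S, variance (fun ω => a i k * e i ω) μ ≤ (a i k) ^ 2 * σ ^ 2 := by
        intro i hi
        rw [variance_const_mul]
        refine mul_le_mul_of_nonneg_left ?_ (sq_nonneg _)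
        have h3 := variance_eq_sub (heLp k i (hmemS i hi))
        rw [h3, hmean i]
        simpa [Pi.pow_apply] using hvar i
      have hsumA : ∑ i, (a i k) ^ 2 = (n : ℝ) := by
        have := hnorm k
        field_simp at this
        linarith [this]
      calc ∫ ω, (b k ω) ^ 2 ∂μ = ∑ i ∈ S, variance (fun ω => a i k * e i ω) μ := by
            rw [hvb, hsumvar]
        _ ≤ ∑ i ∈ S, (a i k) ^ 2 * σ ^ 2 := Finset.sum_le_sum hvar_each
        _ ≤ ∑ i, (a i k) ^ 2 * σ ^ 2 := by
            refine Finset.sum_le_sum_of_subset_of_nonneg (Finset.filter_subset _ _)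
              fun i _ _ => mul_nonneg (sq_nonneg _) (sq_nonneg _)
        _ = σ ^ 2 * (n : ℝ) := by rw [← Finset.sum_mul, hsumA]; ring
    have hGsum : ∫ ω, G ω ∂μ = ∑ k, (∫ ω, (b k ω) ^ 2 ∂μ) / (1 + l * ρ k) := by
      rw [hG]
      rw [integral_finset_sum _ fun k _ => (hterm k).div_const _]
      exact Finset.sum_congr rfl fun k _ => integral_div _ _
    rw [hGsum]
    calc (1 / (n : ℝ)) ^ 2 * ∑ k, (∫ ω, (b k ω) ^ 2 ∂μ) / (1 + l * ρ k)
        ≤ (1 / (n : ℝ)) ^ 2 * ∑ k, (σ ^ 2 * n) / (1 + l * ρ k) := by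
          refine mul_le_mul_of_nonneg_left (Finset.sum_le_sum fun k _ => ?_) (by positivity)
          exact (div_le_div_iff_of_pos_right (hd k)).mpr (hvar' k)
      _ = (σ ^ 2 / n) * ∑ k, (1 + l * ρ k)⁻¹ := by
          rw [Finset.mul_sum, Finset.mul_sum]
          refine Finset.sum_congr rfl fun k _ => ?_
          field_simp [hn', (hd k).ne']
  · rw [integral_undef hGint, mul_zero]
    exact hRHS0
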